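/- A permutation w ∈ S_n in the image of West's stack-sorting map has at most ⌊(n−1)/2⌋ descents, and this bound is attained (e.g., by s(w) for suitable w, such as the permutation 2143⋯(n−1)(n−2)n when n is odd). -/

import Mathlib

/-- Fuel-based implementation of West's stack-sorting map on lists of naturals:
`s(ε) = ε` and `s(L m R) = s(L) s(R) m` where `m` is the largest entry. -/
def stackSortFuel : ℕ → List ℕ → List ℕ
  | 0, _ => []
  | _, [] => []
  | fuel + 1, l =>
    let m := l.foldr max 0
    let i := l.idxOf m
    stackSortFuel fuel (l.take i) ++ stackSortFuel fuel (l.drop (i + 1)) ++ [m]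

/-- West's stack-sorting map. -/
def stackSort (l : List ℕ) : List ℕ := stackSortFuel l.length l

/-- The set of descents of a list. -/
def listDescents (l : List ℕ) : Set ℕ :=
  {i | ∃ a b, l[i]? = some a ∧ l[i + 1]? = some b ∧ b < a}

namespace Stmt12Aux

/-- Count of descents of a list. -/
def descCount : List ℕ → ℕ
  | [] => 0
  | [_] => 0
  | a :: b :: t => (if b < a then 1 else 0) + descCount (b :: t)

lemma descCount_cons_cons (a b : ℕ) (t : List ℕ) :
    descCount (a :: b :: t) = (if b < a then 1 else 0) + descCount (b :: t) := rfl

lemma descCount_append_le (A B : List ℕ) :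
    descCount (A ++ B) ≤ descCount A + descCount B + 1 := by
  induction A with
  | nil => simp [descCount]
  | cons a t ih =>
    cases t with
    | nil =>
      cases B with
      | nil => simp [descCount]
      | cons b s =>
        simp only [List.singleton_append, descCount_cons_cons, descCount]
        split <;> omega
    | cons b t' =>
      simp only [List.cons_append, descCount_cons_cons] at *
      omega

lemma descCount_concat (A : List ℕ) (m : ℕ) (h : ∀ x ∈ A, x ≤ m) :
    descCount (A ++ [m]) = descCount A := by
  induction A with
  | nil => simp [descCount]
  | cons a t ih =>
    cases t with
    | nil =>
      have hnl : ¬ m < a := Nat.not_lt.2 (h a (by simp))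
      simp [descCount_cons_cons, descCount, hnl]
    | cons b t' =>
      simp only [List.cons_append, descCount_cons_cons] at *
      rw [ih (fun x hx => h x (by simp at hx ⊢; tauto))]

lemma le_foldr_max (l : List ℕ) : ∀ x ∈ l, x ≤ l.foldr max 0 := by
  induction l with
  | nil => simp
  | cons a t ih =>
    intro x hx
    simp only [List.mem_cons] at hx
    simp only [List.foldr_cons]
    rcases hx with rfl | hx
    · exact le_max_left _ _
    · exact le_trans (ih x hx) (le_max_right _ _)

lemma foldr_max_le (l : List ℕ) (c : ℕ) (h : ∀ x ∈ l, x ≤ c) : l.foldr max 0 ≤ c := by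
  induction l with
  | nil => simp
  | cons a t ih =>
    simp only [List.foldr_cons, max_le_iff]
    exact ⟨h a (by simp), ih (fun x hx => h x (by simp [hx]))⟩

lemma foldr_max_mem (l : List ℕ) (h : l ≠ []) : l.foldr max 0 ∈ l := by
  induction l with
  | nil => simp at h
  | cons a t ih =>
    simp only [List.foldr_cons]
    rcases eq_or_ne t [] with rfl | ht
    · simp
    · rcases le_total (t.foldr max 0) a with h1 | h1
      · simp [max_eq_left h1]
      · rw [max_eq_right h1]
        exact List.mem_cons_of_mem _ (ih ht)

lemma stackSortFuel_congr : ∀ (f₁ f₂ : ℕ) (l : List ℕ), l.length ≤ f₁ → l.length ≤ f₂ →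
    stackSortFuel f₁ l = stackSortFuel f₂ l := by
  intro f₁
  induction f₁ with
  | zero =>
    intro f₂ l h1 _
    have : l = [] := List.length_eq_zero_iff.1 (Nat.le_zero.1 h1)
    subst this
    cases f₂ <;> rfl
  | succ f ih =>
    intro f₂ l h1 h2
    cases l with
    | nil => cases f₂ <;> rfl
    | cons x xs =>
      cases f₂ with
      | zero => simp at h2
      | succ g =>
        set l := x :: xs with hldef
        set m := l.foldr max 0 with hmdef
        set i := l.idxOf m with hidef
        have hm : m ∈ l := foldr_max_mem _ (by simp [hldef])
        have hi : i < l.length := List.idxOf_lt_length_iff.2 hm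
        have hu1 : stackSortFuel (f + 1) l =
            stackSortFuel f (l.take i) ++ stackSortFuel f (l.drop (i + 1)) ++ [m] := rfl
        have hu2 : stackSortFuel (g + 1) l =
            stackSortFuel g (l.take i) ++ stackSortFuel g (l.drop (i + 1)) ++ [m] := rfl
        rw [hu1, hu2,
          ih g _ (by rw [List.length_take]; omega) (by rw [List.length_take]; omega),
          ih g _ (by rw [List.length_drop]; omega) (by rw [List.length_drop]; omega)]

lemma key : ∀ (fuel : ℕ) (l : List ℕ), l.length ≤ fuel →
    (stackSortFuel fuel l).Perm l ∧
      descCount (stackSortFuel fuel l) ≤ (l.length - 1) / 2 := by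
  intro fuel
  induction fuel with
  | zero =>
    intro l h1
    have : l = [] := List.length_eq_zero_iff.1 (Nat.le_zero.1 h1)
    subst this
    simp [stackSortFuel, descCount]
  | succ f ih =>
    intro l h1
    cases hl : l with
    | nil => simp [stackSortFuel, descCount]
    | cons x xs =>
      subst hl
      set l := x :: xs with hldef
      set m := l.foldr max 0 with hmdef
      set i := l.idxOf m with hidef
      have hm : m ∈ l := foldr_max_mem _ (by simp [hldef])
      have hi : i < l.length := List.idxOf_lt_length_iff.2 hm
      have hunfold : stackSortFuel (f + 1) l =
          stackSortFuel f (l.take i) ++ stackSortFuel f (l.drop (i + 1)) ++ [m] := rfl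
      have hdec : l.take i ++ m :: l.drop (i + 1) = l := by
        conv_rhs => rw [← List.take_append_drop i l]
        rw [List.drop_eq_getElem_cons hi, List.getElem_idxOf hi]
      have hlenA : (l.take i).length = i := by simp [List.length_take]; omega
      have hlenB : (l.drop (i + 1)).length = l.length - (i + 1) := by simp
      obtain ⟨pA, dA⟩ := ih (l.take i) (by omega)
      obtain ⟨pB, dB⟩ := ih (l.drop (i + 1)) (by omega)
      set sA := stackSortFuel f (l.take i) with hsA
      set sB := stackSortFuel f (l.drop (i + 1)) with hsB
      constructor
      · rw [hunfold, List.append_assoc]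
        have h1 : (sB ++ [m]).Perm (m :: l.drop (i + 1)) :=
          (List.perm_append_singleton m sB).trans (pB.cons m)
        have h2 := pA.append h1
        rwa [hdec] at h2
      · rw [hunfold]
        have hle : ∀ y ∈ sA ++ sB, y ≤ m := by
          intro y hy
          rcases List.mem_append.1 hy with hy | hy
          · exact le_foldr_max l y (List.take_subset i l (pA.mem_iff.1 hy))
          · exact le_foldr_max l y (List.drop_subset (i + 1) l (pB.mem_iff.1 hy))
        rw [descCount_concat _ _ hle]
        have hAlen : sA.length = i := by rw [pA.length_eq, hlenA]
        have hBlen : sB.length = l.length - (i + 1) := by rw [pB.length_eq, hlenB]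
        clear_value sA sB
        rcases eq_or_ne sA [] with rfl | hA
        · simp only [List.nil_append]
          rw [hlenB] at dB
          omega
        rcases eq_or_ne sB [] with rfl | hB
        · rw [List.append_nil]
          rw [hlenA] at dA
          omega
        · have h3 := descCount_append_le sA sB
          have h4 : 1 ≤ sA.length := List.length_pos_iff.2 hA
          have h5 : 1 ≤ sB.length := List.length_pos_iff.2 hB
          rw [hlenA] at dA
          rw [hlenB] at dB
          omega

lemma listDescents_finite (l : List ℕ) : (listDescents l).Finite := by
  apply (Set.finite_Iio l.length).subset
  rintro j ⟨a, b, h1, _, _⟩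
  exact (List.getElem?_eq_some_iff.1 h1).1

lemma listDescents_nil : listDescents ([] : List ℕ) = ∅ := by
  ext i; simp [listDescents]

lemma listDescents_single (a : ℕ) : listDescents [a] = ∅ := by
  ext i
  simp only [listDescents, Set.mem_setOf_eq, Set.mem_empty_iff_false, iff_false]
  rintro ⟨x, y, h1, h2, h3⟩
  have := (List.getElem?_eq_some_iff.1 h2).1
  simp at this

lemma listDescents_cons (a b : ℕ) (t : List ℕ) :
    listDescents (a :: b :: t) =
      (if b < a then {0} else ∅) ∪ (fun j => j + 1) '' listDescents (b :: t) := by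
  ext i
  cases i with
  | zero =>
    simp only [listDescents, Set.mem_setOf_eq, Set.mem_union, Set.mem_image]
    constructor
    · rintro ⟨x, y, h1, h2, h3⟩
      simp only [List.getElem?_cons_zero, Option.some.injEq] at h1
      simp only [List.getElem?_cons_succ, List.getElem?_cons_zero, Option.some.injEq] at h2
      subst h1; subst h2
      left
      simp [h3]
    · rintro (h | ⟨j, _, hj⟩)
      · split at h
        · exact ⟨a, b, by simp, by simp, by assumption⟩
        · simp at h
      · omega
  | succ j =>
    simp only [listDescents, Set.mem_setOf_eq, Set.mem_union, Set.mem_image,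
      List.getElem?_cons_succ]
    constructor
    · rintro ⟨x, y, h1, h2, h3⟩
      right
      exact ⟨j, ⟨x, y, h1, h2, h3⟩, rfl⟩
    · rintro (h | ⟨k, hk, hkj⟩)
      · split at h <;> simp at h
      · have : k = j := by omega
        subst this
        exact hk

lemma ncard_listDescents (l : List ℕ) : (listDescents l).ncard = descCount l := by
  induction l using descCount.induct with
  | case1 => rw [listDescents_nil, descCount]; simp
  | case2 a => rw [listDescents_single, descCount]; simp
  | case3 a b t ih =>
    rw [listDescents_cons, descCount_cons_cons]
    have hfin : (listDescents (b :: t)).Finite := listDescents_finite _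
    have hinj : Function.Injective (fun j : ℕ => j + 1) := fun x y h => by simpa using h
    have himg : ((fun j : ℕ => j + 1) '' listDescents (b :: t)).Finite := hfin.image _
    have h0 : (0 : ℕ) ∉ (fun j : ℕ => j + 1) '' listDescents (b :: t) := by simp
    have hcard : ((fun j : ℕ => j + 1) '' listDescents (b :: t)).ncard = descCount (b :: t) := by
      rw [Set.ncard_image_of_injective _ hinj, ih]
    by_cases hba : b < a
    · rw [if_pos hba, if_pos hba, Set.singleton_union,
        Set.ncard_insert_of_notMem h0 himg, hcard]
      omega
    · rw [if_neg hba, if_neg hba, Set.empty_union, hcard]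
      omega

/-- Witness permutation attaining the bound. -/
def wlist : ℕ → List ℕ
  | 0 => []
  | 1 => [1]
  | n + 2 => (n + 1) :: (n + 2) :: wlist n

lemma wlist_mem : ∀ (n : ℕ), ∀ x ∈ wlist n, 1 ≤ x ∧ x ≤ n := by
  intro n
  induction n using wlist.induct with
  | case1 => simp [wlist]
  | case2 => simp [wlist]
  | case3 n ih =>
    intro x hx
    simp only [wlist, List.mem_cons] at hx
    rcases hx with rfl | rfl | hx
    · omega
    · omega
    · have := ih x hx; omega

lemma wlist_length (n : ℕ) : (wlist n).length = n := by
  induction n using wlist.induct with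
  | case1 => simp [wlist]
  | case2 => simp [wlist]
  | case3 n ih => simp [wlist, ih]

lemma wlist_perm (n : ℕ) : (wlist n).Perm (List.range' 1 n) := by
  induction n using wlist.induct with
  | case1 => simp [wlist]
  | case2 => simp [wlist]
  | case3 n ih =>
    have hr : List.range' 1 (n + 2) = List.range' 1 n ++ [n + 1, n + 2] := by
      rw [List.range'_concat, List.range'_concat]
      simp [List.append_assoc]
      omega
    rw [hr]
    show ((n + 1) :: (n + 2) :: wlist n).Perm _
    have h1 : ((n + 1) :: (n + 2) :: wlist n).Perm ([n + 1, n + 2] ++ List.range' 1 n) :=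
      (ih.cons (n + 2)).cons (n + 1)
    exact h1.trans List.perm_append_comm

lemma stackSortFuel_single (f x : ℕ) : stackSortFuel (f + 1) [x] = [x] := by
  show stackSortFuel f _ ++ stackSortFuel f _ ++ _ = _
  have h1 : [x].foldr max 0 = x := by simp
  rw [h1]
  simp only [List.idxOf_cons_self, List.take_zero, List.drop_succ_cons, List.drop_zero]
  cases f <;> rfl

lemma stackSort_wlist_step (n : ℕ) :
    stackSort (wlist (n + 2)) = [n + 1] ++ stackSort (wlist n) ++ [n + 2] := by
  have hmem := wlist_mem n
  have hmax : ((n + 1) :: (n + 2) :: wlist n).foldr max 0 = n + 2 := by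
    simp only [List.foldr_cons]
    have : (wlist n).foldr max 0 ≤ n := foldr_max_le _ _ (fun x hx => (hmem x hx).2)
    omega
  have hidx : ((n + 1) :: (n + 2) :: wlist n).idxOf (n + 2) = 1 := by
    rw [List.idxOf_cons_ne _ (by omega), List.idxOf_cons_self]
  have hlen : (wlist (n + 2)).length = n + 2 := wlist_length _
  show stackSortFuel (wlist (n + 2)).length (wlist (n + 2)) = _
  rw [hlen]
  show stackSortFuel (n + 1) _ ++ stackSortFuel (n + 1) _ ++ [((n + 1) :: (n + 2) :: wlist n).foldr max 0] = _
  rw [show wlist (n + 2) = (n + 1) :: (n + 2) :: wlist n from rfl]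
  rw [hmax, hidx]
  have h1 : ((n + 1) :: (n + 2) :: wlist n).take 1 = [n + 1] := rfl
  have h2 : ((n + 1) :: (n + 2) :: wlist n).drop 2 = wlist n := rfl
  rw [h1, h2]
  cases n with
  | zero => rfl
  | succ k =>
    have hss : stackSort (wlist (k + 1)) = stackSortFuel (k + 1) (wlist (k + 1)) := by
      rw [stackSort, wlist_length]
    rw [stackSortFuel_single,
      stackSortFuel_congr (k + 2) (k + 1) (wlist (k + 1)) (by rw [wlist_length]; omega)
        (by rw [wlist_length]), hss]

lemma descCount_stackSort_wlist (n : ℕ) :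
    descCount (stackSort (wlist n)) = (n - 1) / 2 := by
  induction n using wlist.induct with
  | case1 => rfl
  | case2 => rfl
  | case3 n ih =>
    rw [stackSort_wlist_step]
    set S := stackSort (wlist n) with hS
    have hperm : S.Perm (wlist n) := (key (wlist n).length (wlist n) le_rfl).1
    have hSlen : S.length = n := by rw [hperm.length_eq, wlist_length]
    have hle : ∀ y ∈ [n + 1] ++ S, y ≤ n + 2 := by
      intro y hy
      rcases List.mem_append.1 hy with hy | hy
      · simp at hy; omega
      · have := (wlist_mem n y (hperm.mem_iff.1 hy)).2; omega
    rw [descCount_concat _ _ hle]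
    clear_value S
    cases S with
    | nil =>
      simp only [List.length_nil] at hSlen
      subst hSlen
      norm_num [descCount]
    | cons h t =>
      have hh : h ≤ n := (wlist_mem n h (hperm.mem_iff.1 (by simp))).2
      have hn : 1 ≤ n := by simp at hSlen; omega
      show descCount ((n + 1) :: h :: t) = _
      rw [descCount_cons_cons, if_pos (by omega)]
      have hih : descCount (h :: t) = (n - 1) / 2 := ih
      omega

end Stmt12Aux

/-- A permutation of `{1, …, n}` in the image of West's stack-sorting map has
at most `⌊(n-1)/2⌋` descents, and the bound is attained. -/
theorem stmt_12 (n : ℕ) (hn : 1 ≤ n) :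
    (∀ w : List ℕ, w.Perm (List.range' 1 n) →
      Set.ncard (listDescents (stackSort w)) ≤ (n - 1) / 2) ∧
    (∃ w : List ℕ, w.Perm (List.range' 1 n) ∧
      Set.ncard (listDescents (stackSort w)) = (n - 1) / 2) := by
  constructor
  · intro w hw
    have hlen : w.length = n := by rw [hw.length_eq, List.length_range']
    rw [Stmt12Aux.ncard_listDescents, stackSort, hlen]
    have h2 := (Stmt12Aux.key n w hlen.le).2
    rwa [hlen] at h2
  · exact ⟨Stmt12Aux.wlist n, Stmt12Aux.wlist_perm n, by
      rw [Stmt12Aux.ncard_listDescents, Stmt12Aux.descCount_stackSort_wlist]⟩
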